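/- A P-tracial algebra (A,(m_p)) is deterministic — i.e. m_{p₁⊗p₂}(a₁,…,a_{k₁+k₂}) = m_{p₁}(a₁,…,a_{k₁})·m_{p₂}(a_{k₁+1},…,a_{k₁+k₂}) for all k₁,k₂ ≥ 1, all p₁ ∈ P_{k₁}, p₂ ∈ P_{k₂} and all a's ∈ A — if and only if its P-cumulants satisfy κ_{p₁⊗p₂}(a₁,…,a_{k₁+k₂}) = κ_{p₁}(a₁,…,a_{k₁})·κ_{p₂}(a_{k₁+1},…,a_{k₁+k₂}) for all such data. -/

import Mathlib

open scoped Classical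

/-- Partitions of `{1,…,k,1′,…,k′}`, modelled as setoids on `Fin k ⊕ Fin k`
(unprimed elements on the left, primed on the right). -/
abbrev PP (k : ℕ) := Setoid (Fin k ⊕ Fin k)

noncomputable instance setoidFintypeInst {α : Type*} [Fintype α] : Fintype (Setoid α) :=
  Fintype.ofInjective
    (fun s : Setoid α => (Finset.univ.filter fun p : α × α => s p.1 p.2))
    (by
      intro s t h
      have h' : ∀ x y : α, s x y ↔ t x y := by
        intro x y
        have := Finset.ext_iff.mp h (x, y)
        simpa using this
      exact Setoid.ext h')

/-- number of blocks of a partition -/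
noncomputable def nC {α : Type*} (s : Setoid α) : ℕ := Nat.card (Quotient s)

/-- the identity partition `{{i,i′}}`. -/
def idP (k : ℕ) : PP k := Setoid.ker (Sum.elim (id : Fin k → Fin k) id)

/-- twice the distance `d(p,q) = (nc p + nc q)/2 − nc (p ⊔ q)`. -/
noncomputable def d2 {k : ℕ} (p q : PP k) : ℤ := (nC p : ℤ) + nC q - 2 * nC (p ⊔ q)

/-- the geodesic order on partitions: `q ≤ p` iff `d(id,q) + d(q,p) = d(id,p)`. -/
def pLe {k : ℕ} (q p : PP k) : Prop := d2 (idP k) q + d2 q p = d2 (idP k) p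

/-- a permutation `σ` seen as the partition `{{i, σ(i)′}}`. -/
def permToP {k : ℕ} (σ : Equiv.Perm (Fin k)) : PP k :=
  Setoid.ker (Sum.elim (fun i => σ i) (fun j => j))

/-- tensor product of partitions: place `q` to the right of `p`. -/
def ptensor {k l : ℕ} (p : PP k) (q : PP l) : PP (k + l) :=
  Setoid.ker (fun x : Fin (k + l) ⊕ Fin (k + l) =>
    match x with
    | Sum.inl i =>
      (match finSumFinEquiv.symm i with
       | Sum.inl a => (Sum.inl (Quotient.mk p (Sum.inl a)) : Quotient p ⊕ Quotient q)
       | Sum.inr b => Sum.inr (Quotient.mk q (Sum.inl b)))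
    | Sum.inr i =>
      (match finSumFinEquiv.symm i with
       | Sum.inl a => Sum.inl (Quotient.mk p (Sum.inr a))
       | Sum.inr b => Sum.inr (Quotient.mk q (Sum.inr b))))

/-- transpose of a partition: exchange `i` and `i′`. -/
def ptrans {k : ℕ} (p : PP k) : PP k := Setoid.comap Sum.swap p

/-- the map exchanging `j` and `j′` for the (0-based) indices `j ≥ l`. -/
def swapAbove {k : ℕ} (l : ℕ) : Fin k ⊕ Fin k → Fin k ⊕ Fin k
  | Sum.inl i => if l ≤ (i : ℕ) then Sum.inr i else Sum.inl i
  | Sum.inr i => if l ≤ (i : ℕ) then Sum.inl i else Sum.inr i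

/-- the operation `S_l` on partitions: exchange `j` and `j′` for every column `j > l`. -/
def sOp {k : ℕ} (l : ℕ) (p : PP k) : PP k := Setoid.comap (swapAbove l) p

/-- the setoid of "same cycle of σ". -/
def sameCycleSetoid {k : ℕ} (σ : Equiv.Perm (Fin k)) : Setoid (Fin k) :=
  ⟨σ.SameCycle, ⟨fun _ => Equiv.Perm.SameCycle.refl σ _, fun h => h.symm, fun h h' => h.trans h'⟩⟩

/-- number of orbits (fixed points included) of a permutation. -/
noncomputable def cyc {k : ℕ} (σ : Equiv.Perm (Fin k)) : ℕ :=
  Nat.card (Quotient (sameCycleSetoid σ))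

/-- reflection length `ℓ(σ) = k − c(σ)`. -/
noncomputable def plen {k : ℕ} (σ : Equiv.Perm (Fin k)) : ℤ := (k : ℤ) - cyc σ

/-- the geodesic (absolute) order on permutations. -/
def permLe {k : ℕ} (τ σ : Equiv.Perm (Fin k)) : Prop := plen τ + plen (τ⁻¹ * σ) = plen σ

/-- `σ₁ ⊕ σ₂`, acting as `σ₁` on `{1,…,l}` and as the shifted copy of `σ₂` on `{l+1,…,l+m}`. -/
def sumPerm {l m : ℕ} (σ₁ : Equiv.Perm (Fin l)) (σ₂ : Equiv.Perm (Fin m)) :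
    Equiv.Perm (Fin (l + m)) :=
  finSumFinEquiv.permCongr (Equiv.sumCongr σ₁ σ₂)

/-- the setoid generated by a relation `r`. -/
def genSetoid {α : Type*} (r : α → α → Prop) : Setoid α :=
  sInf {s : Setoid α | ∀ x y, r x y → s x y}

/-- the lexicographic encoding `(j, t) ↦ ∑_{j' < j} n j' + t` of `Σ j, Fin (n j)` into
`Fin (∑ j, n j)`. -/
def encodeSigma {k : ℕ} (n : Fin k → ℕ) (x : Σ j : Fin k, Fin (n j)) : Fin (∑ j, n j) :=
  ⟨(∑ j' ∈ Finset.univ.filter fun j' => j' < x.1, n j') + (x.2 : ℕ), by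
    calc (∑ j' ∈ Finset.univ.filter fun j' => j' < x.1, n j') + (x.2 : ℕ)
        < (∑ j' ∈ Finset.univ.filter fun j' => j' < x.1, n j') + n x.1 := by
          exact Nat.add_lt_add_left x.2.isLt _
      _ = ∑ j' ∈ insert x.1 (Finset.univ.filter fun j' => j' < x.1), n j' := by
          rw [Finset.sum_insert (by simp)]
          ring
      _ ≤ ∑ j', n j' := Finset.sum_le_sum_of_subset (Finset.subset_univ _)⟩

/-- `endOf n x` identifies `x` as an external endpoint of its group: the top of the `j`-th
group if `x` is the first unprimed element, the bottom if `x` is the last primed one. -/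
def endOf {k : ℕ} (n : Fin k → ℕ) :
    (Σ j : Fin k, Fin (n j)) ⊕ (Σ j : Fin k, Fin (n j)) → Option (Fin k ⊕ Fin k)
  | Sum.inl ⟨j, t⟩ => if (t : ℕ) = 0 then some (Sum.inl j) else none
  | Sum.inr ⟨j, t⟩ => if (t : ℕ) + 1 = n j then some (Sum.inr j) else none

/-- the elementary relations defining the partition `Insⁿ(p) ∘ σ` appearing in the
product-compatibility axiom: within the `j`-th group, the primed (bottom) vertex of a
factor is glued to the unprimed (top) vertex of the next factor, and the external
endpoints of the groups are glued according to `p`. -/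
def chainRel {k : ℕ} (n : Fin k → ℕ) (p : PP k) :
    ((Σ j : Fin k, Fin (n j)) ⊕ (Σ j : Fin k, Fin (n j))) →
      ((Σ j : Fin k, Fin (n j)) ⊕ (Σ j : Fin k, Fin (n j))) → Prop :=
  fun x y =>
    (∃ (j : Fin k) (t : ℕ) (h1 : t + 1 < n j),
        x = Sum.inr ⟨j, ⟨t, Nat.lt_of_succ_lt h1⟩⟩ ∧ y = Sum.inl ⟨j, ⟨t + 1, h1⟩⟩) ∨
    (∃ u v, p u v ∧ endOf n x = some u ∧ endOf n y = some v)

/-- the partition `Insⁿ_i(p) ∘ σ ∈ P_{∑ n_j}` of the product-compatibility axiom. -/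
def insPart {k : ℕ} (n : Fin k → ℕ) (p : PP k) : PP (∑ j, n j) :=
  genSetoid fun x y =>
    ∃ u v, chainRel n p u v ∧
      x = Sum.map (encodeSigma n) (encodeSigma n) u ∧
      y = Sum.map (encodeSigma n) (encodeSigma n) v

/-- relabelling of the columns of a partition by a permutation: `σ ∘ p ∘ σ⁻¹`. -/
def relabel {k : ℕ} (σ : Equiv.Perm (Fin k)) (p : PP k) : PP k :=
  Setoid.comap (Sum.map σ.symm σ.symm) p

/-- A `P`-tracial algebra: a complex algebra `A` together with `k`-linear forms
`m_p : A^k → ℂ`, indexed by the partitions `p ∈ P_k`, which are symmetric under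
simultaneous relabelling of the columns and of the arguments, and compatible with the
product of `A`. -/
structure PTracial (A : Type*) [Ring A] [Algebra ℂ A] where
  m : ∀ k : ℕ, PP k → (Fin k → A) → ℂ
  m_add : ∀ (k : ℕ) (p : PP k) (a : Fin k → A) (s : Fin k) (x y : A),
    m k p (Function.update a s (x + y)) =
      m k p (Function.update a s x) + m k p (Function.update a s y)
  m_smul : ∀ (k : ℕ) (p : PP k) (a : Fin k → A) (s : Fin k) (c : ℂ) (x : A),
    m k p (Function.update a s (c • x)) = c * m k p (Function.update a s x)
  m_symm : ∀ (k : ℕ) (p : PP k) (σ : Equiv.Perm (Fin k)) (a : Fin k → A),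
    m k p a = m k (relabel σ p) fun s => a (σ.symm s)
  m_prod : ∀ (k : ℕ) (p : PP k) (n : Fin k → ℕ), (∀ j, 0 < n j) →
    ∀ (a : ∀ j : Fin k, Fin (n j) → A) (b : Fin (∑ j, n j) → A),
      (∀ (j : Fin k) (t : Fin (n j)), b (encodeSigma n ⟨j, t⟩) = a j t) →
      m k p (fun j => (List.ofFn (a j)).prod) = m (∑ j, n j) (insPart n p) b

/-- extraction of a partition to a subset `J` of its columns. -/
def extractP {k : ℕ} (p : PP k) (J : Finset (Fin k)) : PP J.card :=
  Setoid.comap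
    (Sum.map (fun t => ((J.orderIsoOfFin rfl t : J) : Fin k))
      (fun t => ((J.orderIsoOfFin rfl t : J) : Fin k))) p

/-- columns `s` and `t` meet a common block of `p`. -/
def colRel {k : ℕ} (p : PP k) (s t : Fin k) : Prop :=
  p (Sum.inl s) (Sum.inl t) ∨ p (Sum.inl s) (Sum.inr t) ∨
    p (Sum.inr s) (Sum.inl t) ∨ p (Sum.inr s) (Sum.inr t)

/-- `P`-freeness of two subalgebras, relative to the `P`-cumulant forms `κ`:
not-compatible mixed cumulants vanish, and cumulants factorize over tensor products. -/
def PFree {A : Type*} [Ring A] [Algebra ℂ A]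
    (κ : ∀ k : ℕ, PP k → (Fin k → A) → ℂ) (A₁ A₂ : Subalgebra ℂ A) : Prop :=
  (∀ (k : ℕ) (p : PP k) (a : Fin k → A), (∀ s, a s ∈ A₁ ∨ a s ∈ A₂) →
    (∃ s s' : Fin k, a s ∈ A₁ ∧ a s' ∈ A₂ ∧ colRel p s s') → κ k p a = 0) ∧
  (∀ (k₁ k₂ : ℕ) (p₁ : PP k₁) (p₂ : PP k₂) (a : Fin k₁ → A) (b : Fin k₂ → A),
    (∀ s, a s ∈ A₁) → (∀ s, b s ∈ A₂) →
    κ (k₁ + k₂) (ptensor p₁ p₂) (Fin.append a b) = κ k₁ p₁ a * κ k₂ p₂ b)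

section PartA
variable {α : Type*}

variable {α : Type*}

theorem mk_eq_iff {s : Setoid α} {a b : α} :
    Quotient.mk s a = Quotient.mk s b ↔ s a b :=
  ⟨fun h => Quotient.exact h, fun h => Quotient.sound h⟩

theorem sle {s t : Setoid α} (h : s ≤ t) {x y : α} (hxy : s x y) : t x y := h hxy

/-- the canonical map between quotients along `≤`. -/
noncomputable def qmap {s t : Setoid α} (h : s ≤ t) : Quotient s → Quotient t :=
  Quotient.lift (fun a => Quotient.mk t a) (fun _ _ hab => mk_eq_iff.mpr (h hab))

theorem qmap_mk {s t : Setoid α} (h : s ≤ t) (a : α) :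
    qmap h (Quotient.mk s a) = Quotient.mk t a := rfl

theorem qmap_surj {s t : Setoid α} (h : s ≤ t) : Function.Surjective (qmap h) := by
  intro x
  induction x using Quotient.ind with
  | _ a => exact ⟨Quotient.mk s a, rfl⟩

theorem nC_anti [Finite α] {s t : Setoid α} (h : s ≤ t) : nC t ≤ nC s :=
  Nat.card_le_card_of_surjective (qmap h) (qmap_surj h)

theorem nC_le_card [Finite α] (s : Setoid α) : nC s ≤ Nat.card α :=
  Nat.card_le_card_of_surjective (Quotient.mk s)
    (fun x => Quotient.inductionOn x fun a => ⟨a, rfl⟩)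

theorem setoid_eq_of_le_of_nC_le [Finite α] {s t : Setoid α} (h : s ≤ t)
    (hc : nC s ≤ nC t) : s = t := by
  have hb : Function.Bijective (qmap h) :=
    (qmap_surj h).bijective_of_nat_card_le hc
  refine le_antisymm h fun x y hxy => ?_
  have h1 : qmap h (Quotient.mk s x) = qmap h (Quotient.mk s y) := by
    rw [qmap_mk, qmap_mk]; exact mk_eq_iff.mpr hxy
  exact mk_eq_iff.mp (hb.1 h1)

/-- the partition with the single non-trivial block `{x,y}`. -/
def pairS (x y : α) : Setoid α :=
  ⟨fun a b => a = b ∨ (a = x ∧ b = y) ∨ (a = y ∧ b = x),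
   ⟨fun _ => Or.inl rfl,
    by rintro a b (rfl | ⟨rfl, rfl⟩ | ⟨rfl, rfl⟩) <;> tauto,
    by
      intro a b c h1 h2
      rcases h1 with h | ⟨h1a, h1b⟩ | ⟨h1a, h1b⟩ <;>
        rcases h2 with h' | ⟨h2a, h2b⟩ | ⟨h2a, h2b⟩ <;> subst_vars <;> tauto⟩⟩

theorem pairS_rel_self (x y : α) : pairS x y x y := Or.inr (Or.inl ⟨rfl, rfl⟩)

theorem sup_pair_rel {s : Setoid α} {x y c d : α} (h : (s ⊔ pairS x y) c d) :
    s c d ∨ (s c x ∧ s y d) ∨ (s c y ∧ s x d) := by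
  let R : Setoid α :=
    ⟨fun a b => s a b ∨ (s a x ∧ s y b) ∨ (s a y ∧ s x b),
     ⟨fun a => Or.inl (s.refl a),
      by
        rintro a b (hab | ⟨h1, h2⟩ | ⟨h1, h2⟩)
        · exact Or.inl (s.symm hab)
        · exact Or.inr (Or.inr ⟨s.symm h2, s.symm h1⟩)
        · exact Or.inr (Or.inl ⟨s.symm h2, s.symm h1⟩),
      by
        rintro a b c (hab | ⟨h1, h2⟩ | ⟨h1, h2⟩) (hbc | ⟨h3, h4⟩ | ⟨h3, h4⟩)
        · exact Or.inl (s.trans hab hbc)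
        · exact Or.inr (Or.inl ⟨s.trans hab h3, h4⟩)
        · exact Or.inr (Or.inr ⟨s.trans hab h3, h4⟩)
        · exact Or.inr (Or.inl ⟨h1, s.trans h2 hbc⟩)
        · exact Or.inl (s.trans h1 (s.trans (s.symm (s.trans h2 h3)) h4))
        · exact Or.inl (s.trans h1 h4)
        · exact Or.inr (Or.inr ⟨h1, s.trans h2 hbc⟩)
        · exact Or.inl (s.trans h1 h4)
        · exact Or.inl (s.trans h1 (s.trans (s.symm (s.trans h2 h3)) h4))⟩⟩
  have h1 : s ≤ R := fun a b hab => Or.inl hab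
  have h2 : pairS x y ≤ R := by
    rintro a b (rfl | ⟨ha, hb⟩ | ⟨ha, hb⟩)
    · exact Or.inl (s.refl a)
    · exact Or.inr (Or.inl ⟨ha ▸ s.refl a, hb ▸ s.refl b⟩)
    · exact Or.inr (Or.inr ⟨ha ▸ s.refl a, hb ▸ s.refl b⟩)
  exact (sup_le h1 h2) h

theorem nC_option_aux {γ : Type*} [Finite γ] : Nat.card (Option γ) = Nat.card γ + 1 := by
  haveI := Fintype.ofFinite γ
  rw [Nat.card_eq_fintype_card, Nat.card_eq_fintype_card, Fintype.card_option]

theorem nC_le_sup_pair [Finite α] (s : Setoid α) (x y : α) :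
    nC s ≤ nC (s ⊔ pairS x y) + 1 := by
  haveI : Finite (Quotient (s ⊔ pairS x y)) := Quotient.finite _
  haveI : Finite (Quotient s) := Quotient.finite _
  haveI := Fintype.ofFinite (Quotient (s ⊔ pairS x y))
  have hle : s ≤ s ⊔ pairS x y := le_sup_left
  have hinj : Function.Injective (fun u : Quotient s =>
      if u = Quotient.mk s x then (none : Option (Quotient (s ⊔ pairS x y)))
      else some (qmap hle u)) := by
    intro u v h
    induction u using Quotient.ind with | _ c =>
    induction v using Quotient.ind with | _ d =>
    by_cases hu : Quotient.mk s c = Quotient.mk s x <;>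
      by_cases hv : Quotient.mk s d = Quotient.mk s x <;>
      simp only [hu, hv, if_pos, if_neg, Option.some.injEq, reduceIte] at h
    · exact hu.trans hv.symm
    · exact absurd h (by simp [hu, hv])
    · exact absurd h (by simp [hu, hv])
    · rw [qmap_mk, qmap_mk] at h
      rcases sup_pair_rel (mk_eq_iff.mp h) with h' | ⟨h1, _⟩ | ⟨_, h2⟩
      · exact mk_eq_iff.mpr h'
      · exact absurd (mk_eq_iff.mpr h1) hu
      · exact absurd (mk_eq_iff.mpr (s.symm h2)) hv
  calc nC s ≤ Nat.card (Option (Quotient (s ⊔ pairS x y))) :=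
        Nat.card_le_card_of_injective _ hinj
    _ = nC (s ⊔ pairS x y) + 1 := nC_option_aux

theorem W_deg [Finite α] (s t : Setoid α) (hdeg : ∀ x y, t x y → x = y) :
    nC s + nC t ≤ Nat.card α + nC (s ⊔ t) := by
  have h1 : nC t = Nat.card α := by
    refine (Nat.card_eq_of_bijective (Quotient.mk t)
      ⟨fun a b h => hdeg a b (mk_eq_iff.mp h),
       fun x => Quotient.inductionOn x fun a => ⟨a, rfl⟩⟩).symm
  have h2 : s ⊔ t = s := by
    rw [sup_comm]
    exact sup_eq_right.mpr fun x y hxy => (hdeg x y hxy) ▸ s.refl x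
  rw [h1, h2]
  omega

theorem nC_weak_submodular [Finite α] (s t : Setoid α) :
    nC s + nC t ≤ Nat.card α + nC (s ⊔ t) := by
  suffices H : ∀ m : ℕ, ∀ s t : Setoid α, Nat.card α ≤ nC t + m →
      nC s + nC t ≤ Nat.card α + nC (s ⊔ t) by
    exact H (Nat.card α) s t (by omega)
  intro m
  induction m with
  | zero =>
    intro s t hm
    have hsurj : Function.Surjective (Quotient.mk t) :=
      fun x => Quotient.inductionOn x fun a => ⟨a, rfl⟩
    have hb : Function.Bijective (Quotient.mk t) :=
      hsurj.bijective_of_nat_card_le (by simpa [nC] using hm)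
    exact W_deg s t fun x y hxy => hb.1 (mk_eq_iff.mpr hxy)
  | succ m ih =>
    intro s t hm
    by_cases hdeg : ∀ x y, t x y → x = y
    · exact W_deg s t hdeg
    · push_neg at hdeg
      obtain ⟨x, y, hxy, hne⟩ := hdeg
      set t' : Setoid α :=
        Setoid.ker (fun z => ((Quotient.mk t z : Quotient t), (z = y : Prop))) with ht'
      have ht'le : t' ≤ t := by
        intro z w h
        exact mk_eq_iff.mp (congrArg Prod.fst h)
      have ht'flag : ∀ {z w}, t' z w → ((z = y) ↔ (w = y)) := by
        intro z w h
        exact iff_of_eq (congrArg Prod.snd h)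
      have ht'intro : ∀ {z w}, t z w → ¬ z = y → ¬ w = y → t' z w := by
        intro z w h hz hw
        show (_, _) = (_, _)
        rw [Prod.mk.injEq]
        exact ⟨mk_eq_iff.mpr h, by simp [hz, hw]⟩
      have hsup : t = t' ⊔ pairS x y := by
        refine le_antisymm ?_ (sup_le ht'le ?_)
        · intro z w h
          by_cases hz : z = y
          · by_cases hw : w = y
            · exact (hz.trans hw.symm) ▸ (t' ⊔ pairS x y).refl z
            · refine (t' ⊔ pairS x y).trans
                (sle le_sup_right (Or.inr (Or.inr ⟨hz, rfl⟩)) : (t' ⊔ pairS x y) z x) ?_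
              exact sle le_sup_left (ht'intro (t.trans hxy (hz ▸ h)) hne hw)
          · by_cases hw : w = y
            · refine (t' ⊔ pairS x y).trans
                (sle le_sup_left (ht'intro (t.trans h (hw ▸ t.symm hxy)) hz hne) :
                  (t' ⊔ pairS x y) z x) ?_
              exact sle le_sup_right (Or.inr (Or.inl ⟨rfl, hw⟩))
            · exact sle le_sup_left (ht'intro h hz hw)
        · rintro a b (rfl | ⟨ha, hb⟩ | ⟨ha, hb⟩)
          · exact t.refl a
          · exact ha ▸ hb ▸ hxy
          · exact ha ▸ hb ▸ t.symm hxy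
      have hcard' : nC t + 1 ≤ nC t' := by
        have hinj : Function.Injective (fun o : Option (Quotient t) =>
            match o with
            | none => Quotient.mk t' y
            | some u => Quotient.mk t' (if u.out = y then x else u.out)) := by
          have hrne : ∀ u : Quotient t, ¬ (if u.out = y then x else u.out) = y := by
            intro u
            by_cases h : u.out = y <;> simp [h, hne]
          have hrel : ∀ u : Quotient t, t u.out (if u.out = y then x else u.out) := by
            intro u
            by_cases h : u.out = y
            · rw [if_pos h]
              rw [h]
              exact t.symm hxy
            · rw [if_neg h] <;> exact t.refl _
          rintro (_ | u) (_ | v) h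
          · rfl
          · exfalso
            have := ht'flag (mk_eq_iff.mp h)
            exact hrne v (this.mp rfl)
          · exfalso
            have := ht'flag (mk_eq_iff.mp h)
            exact hrne u (this.mpr rfl)
          · have h1 : t (if u.out = y then x else u.out) (if v.out = y then x else v.out) :=
              ht'le (mk_eq_iff.mp h)
            have h2 : t u.out v.out := t.trans (hrel u) (t.trans h1 (t.symm (hrel v)))
            have : Quotient.mk t u.out = Quotient.mk t v.out := mk_eq_iff.mpr h2
            rw [Quotient.out_eq, Quotient.out_eq] at this
            rw [this]
        calc nC t + 1 = Nat.card (Option (Quotient t)) := nC_option_aux.symm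
          _ ≤ nC t' := Nat.card_le_card_of_injective _ hinj
      have hW1 : nC (s ⊔ t') ≤ nC (s ⊔ t) + 1 := by
        have : (s ⊔ t') ⊔ pairS x y = s ⊔ t := by rw [sup_assoc, ← hsup]
        have h := nC_le_sup_pair (s ⊔ t') x y
        rw [this] at h
        exact h
      have hIH := ih s t' (by omega)
      omega

theorem nC_add_nC_le [Finite α] {q a b : Setoid α} (ha : q ≤ a) (hb : q ≤ b) :
    nC a + nC b ≤ nC q + nC (a ⊔ b) := by
  classical
  -- transport everything to the quotient by `q`
  let bar : Setoid α → Setoid (Quotient q) := fun s =>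
    Setoid.ker (fun u : Quotient q => Quotient.mk s u.out)
  have bar_rel : ∀ (s : Setoid α), q ≤ s → ∀ x y : α,
      (bar s) (Quotient.mk q x) (Quotient.mk q y) ↔ s x y := by
    intro s hs x y
    have hx : s (Quotient.mk q x).out x :=
      hs (mk_eq_iff.mp (Quotient.out_eq (Quotient.mk q x)))
    have hy : s (Quotient.mk q y).out y :=
      hs (mk_eq_iff.mp (Quotient.out_eq (Quotient.mk q y)))
    constructor
    · intro h
      exact s.trans (s.symm hx) (s.trans (mk_eq_iff.mp h) hy)
    · intro h
      exact mk_eq_iff.mpr (s.trans hx (s.trans h (s.symm hy)))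
  have bar_card : ∀ (s : Setoid α), q ≤ s → nC (bar s) = nC s := by
    intro s hs
    refine Nat.card_eq_of_bijective
      (Quotient.lift (fun u : Quotient q => Quotient.mk s u.out)
        (fun u v (h : Quotient.mk s u.out = Quotient.mk s v.out) => h)) ⟨?_, ?_⟩
    · intro x y
      induction x using Quotient.ind
      induction y using Quotient.ind
      intro h
      exact Quotient.sound h
    · intro w
      induction w using Quotient.ind with | _ c =>
      refine ⟨Quotient.mk (bar s) (Quotient.mk q c), ?_⟩
      show Quotient.mk s (Quotient.mk q c).out = Quotient.mk s c
      exact mk_eq_iff.mpr (hs (mk_eq_iff.mp (Quotient.out_eq (Quotient.mk q c))))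
  have bar_mono : ∀ {s u : Setoid α}, s ≤ u → bar s ≤ bar u := by
    intro s u hsu w v h
    exact mk_eq_iff.mpr (hsu (mk_eq_iff.mp h))
  have bar_sup : bar (a ⊔ b) = bar a ⊔ bar b := by
    refine le_antisymm ?_ (sup_le (bar_mono le_sup_left) (bar_mono le_sup_right))
    · intro u v h
      have h' : (a ⊔ b) u.out v.out := mk_eq_iff.mp h
      let tt : Setoid α := Setoid.comap (fun z => (Quotient.mk q z : Quotient q)) (bar a ⊔ bar b)
      have hat : a ≤ tt := by
        intro x y hxy
        exact sle le_sup_left ((bar_rel a ha x y).mpr hxy)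
      have hbt : b ≤ tt := by
        intro x y hxy
        exact sle le_sup_right ((bar_rel b hb x y).mpr hxy)
      have := (sup_le hat hbt) h'
      have h2 : (bar a ⊔ bar b) (Quotient.mk q u.out) (Quotient.mk q v.out) := this
      rw [Quotient.out_eq, Quotient.out_eq] at h2
      exact h2
  have hqa : nC (bar a) = nC a := bar_card a ha
  have hqb : nC (bar b) = nC b := bar_card b hb
  have hqs : nC (bar (a ⊔ b)) = nC (a ⊔ b) := bar_card _ (ha.trans le_sup_left)
  have hw := nC_weak_submodular (bar a) (bar b)
  rw [hqa, hqb, ← bar_sup, hqs] at hw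
  exact hw

end PartA


section PartB

/-- the obvious "side by side" partition on a sum type. -/
def sfun {α β : Type*} (p : Setoid α) (q : Setoid β) : α ⊕ β → Quotient p ⊕ Quotient q :=
  Sum.elim (fun a => Sum.inl (Quotient.mk p a)) (fun b => Sum.inr (Quotient.mk q b))

def sumS {α β : Type*} (p : Setoid α) (q : Setoid β) : Setoid (α ⊕ β) :=
  Setoid.ker (sfun p q)

variable {α β : Type*}

theorem sumS_inl_inl {p : Setoid α} {q : Setoid β} {a a' : α} :
    sumS p q (Sum.inl a) (Sum.inl a') ↔ p a a' := by
  show sfun p q (Sum.inl a) = sfun p q (Sum.inl a') ↔ _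
  simp [sfun, mk_eq_iff]

theorem sumS_inr_inr {p : Setoid α} {q : Setoid β} {b b' : β} :
    sumS p q (Sum.inr b) (Sum.inr b') ↔ q b b' := by
  show sfun p q (Sum.inr b) = sfun p q (Sum.inr b') ↔ _
  simp [sfun, mk_eq_iff]

theorem sumS_inl_inr {p : Setoid α} {q : Setoid β} {a : α} {b : β} :
    ¬ sumS p q (Sum.inl a) (Sum.inr b) := by
  show ¬ sfun p q (Sum.inl a) = sfun p q (Sum.inr b)
  simp [sfun]

theorem sumS_inr_inl {p : Setoid α} {q : Setoid β} {a : α} {b : β} :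
    ¬ sumS p q (Sum.inr b) (Sum.inl a) := by
  show ¬ sfun p q (Sum.inr b) = sfun p q (Sum.inl a)
  simp [sfun]

theorem sumS_mono {p p' : Setoid α} {q q' : Setoid β} (hp : p ≤ p') (hq : q ≤ q') :
    sumS p q ≤ sumS p' q' := by
  rintro (a | b) (a' | b') h
  · exact sumS_inl_inl.mpr (hp (sumS_inl_inl.mp h))
  · exact absurd h sumS_inl_inr
  · exact absurd h sumS_inr_inl
  · exact sumS_inr_inr.mpr (hq (sumS_inr_inr.mp h))

theorem sumS_inj {p p' : Setoid α} {q q' : Setoid β} (h : sumS p q = sumS p' q') :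
    p = p' ∧ q = q' := by
  constructor
  · apply Setoid.ext; intro a a'
    exact ⟨fun hp => sumS_inl_inl.mp (h ▸ sumS_inl_inl.mpr hp),
      fun hp => sumS_inl_inl.mp (h.symm ▸ sumS_inl_inl.mpr hp)⟩
  · apply Setoid.ext; intro b b'
    exact ⟨fun hq => sumS_inr_inr.mp (h ▸ sumS_inr_inr.mpr hq),
      fun hq => sumS_inr_inr.mp (h.symm ▸ sumS_inr_inr.mpr hq)⟩

theorem sumS_sup (p p' : Setoid α) (q q' : Setoid β) :
    sumS p q ⊔ sumS p' q' = sumS (p ⊔ p') (q ⊔ q') := by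
  refine le_antisymm (sup_le (sumS_mono le_sup_left le_sup_left)
    (sumS_mono le_sup_right le_sup_right)) ?_
  have hL : p ⊔ p' ≤ Setoid.comap Sum.inl (sumS p q ⊔ sumS p' q') := by
    refine sup_le ?_ ?_
    · intro a a' h
      exact sle le_sup_left (sumS_inl_inl.mpr h)
    · intro a a' h
      exact sle le_sup_right (sumS_inl_inl.mpr h)
  have hR : q ⊔ q' ≤ Setoid.comap Sum.inr (sumS p q ⊔ sumS p' q') := by
    refine sup_le ?_ ?_
    · intro b b' h
      exact sle le_sup_left (sumS_inr_inr.mpr h)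
    · intro b b' h
      exact sle le_sup_right (sumS_inr_inr.mpr h)
  rintro (a | b) (a' | b') h
  · exact hL (sumS_inl_inl.mp h)
  · exact absurd h sumS_inl_inr
  · exact absurd h sumS_inr_inl
  · exact hR (sumS_inr_inr.mp h)

theorem sumS_split {s : Setoid (α ⊕ β)} (h : s ≤ sumS (⊤ : Setoid α) (⊤ : Setoid β)) :
    s = sumS (Setoid.comap Sum.inl s) (Setoid.comap Sum.inr s) := by
  apply Setoid.ext
  rintro (a | b) (a' | b')
  · rw [sumS_inl_inl]; exact Iff.rfl
  · exact iff_of_false (fun hs => sumS_inl_inr (h hs)) sumS_inl_inr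
  · exact iff_of_false (fun hs => sumS_inr_inl (h hs)) sumS_inr_inl
  · rw [sumS_inr_inr]; exact Iff.rfl

noncomputable def sumSQuot (p : Setoid α) (q : Setoid β) :
    Quotient (sumS p q) ≃ Quotient p ⊕ Quotient q :=
  Setoid.quotientKerEquivOfRightInverse (sfun p q)
    (Sum.elim (fun u => Sum.inl u.out) (fun v => Sum.inr v.out))
    (by
      rintro (u | v)
      · show Sum.inl (Quotient.mk p (u.out)) = Sum.inl u
        rw [Quotient.out_eq]
      · show Sum.inr (Quotient.mk q (v.out)) = Sum.inr v
        rw [Quotient.out_eq])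

theorem nC_sumS [Finite α] [Finite β] (p : Setoid α) (q : Setoid β) :
    nC (sumS p q) = nC p + nC q := by
  haveI : Finite (Quotient p) := Quotient.finite _
  haveI : Finite (Quotient q) := Quotient.finite _
  rw [nC, Nat.card_congr (sumSQuot p q), Nat.card_sum]
  rfl

-- generic comap-along-equiv lemmas
theorem comap_equiv_rel (e : α ≃ β) (r : Setoid β) (x y : α) :
    Setoid.comap (⇑e) r x y ↔ r (e x) (e y) := Iff.rfl

theorem comap_comap_equiv (e : α ≃ β) (r : Setoid β) :
    Setoid.comap (⇑e.symm) (Setoid.comap (⇑e) r) = r := by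
  apply Setoid.ext; intro x y
  show r (e (e.symm x)) (e (e.symm y)) ↔ r x y
  simp

theorem comap_comap_equiv' (e : α ≃ β) (r : Setoid α) :
    Setoid.comap (⇑e) (Setoid.comap (⇑e.symm) r) = r := by
  apply Setoid.ext; intro x y
  show r (e.symm (e x)) (e.symm (e y)) ↔ r x y
  simp

theorem comap_equiv_mono (e : α ≃ β) {r s : Setoid β} (h : r ≤ s) :
    Setoid.comap (⇑e) r ≤ Setoid.comap (⇑e) s := fun _ _ hxy => h hxy

theorem comap_equiv_sup (e : α ≃ β) (r s : Setoid β) :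
    Setoid.comap (⇑e) (r ⊔ s) = Setoid.comap (⇑e) r ⊔ Setoid.comap (⇑e) s := by
  refine le_antisymm ?_ (sup_le (comap_equiv_mono e le_sup_left) (comap_equiv_mono e le_sup_right))
  intro x y h
  have key : r ⊔ s ≤ Setoid.comap (⇑e.symm) (Setoid.comap (⇑e) r ⊔ Setoid.comap (⇑e) s) := by
    refine sup_le ?_ ?_
    · intro u v huv
      refine sle le_sup_left ?_
      show r (e (e.symm u)) (e (e.symm v))
      simpa using huv
    · intro u v huv
      refine sle le_sup_right ?_
      show s (e (e.symm u)) (e (e.symm v))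
      simpa using huv
  have h2 := key h
  have h3 : (Setoid.comap (⇑e) r ⊔ Setoid.comap (⇑e) s) (e.symm (e x)) (e.symm (e y)) := h2
  simpa using h3

theorem nC_comap_equiv (e : α ≃ β) (r : Setoid β) : nC (Setoid.comap (⇑e) r) = nC r :=
  Nat.card_congr (Quotient.congr e (fun _ _ => Iff.rfl))

theorem comap_equiv_top (e : α ≃ β) : Setoid.comap (⇑e) (⊤ : Setoid β) = ⊤ := by
  apply Setoid.ext; intro x y
  show (⊤ : Setoid β) (e x) (e y) ↔ (⊤ : Setoid (α)) x y
  simp [Setoid.top_def]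

-- the reindexing equivalence underlying `ptensor`
def tInv (k l : ℕ) : Fin (k + l) ⊕ Fin (k + l) → (Fin k ⊕ Fin k) ⊕ (Fin l ⊕ Fin l) :=
  fun x => match x with
    | Sum.inl i =>
      (match finSumFinEquiv.symm i with
       | Sum.inl a => Sum.inl (Sum.inl a)
       | Sum.inr b => Sum.inr (Sum.inl b))
    | Sum.inr i =>
      (match finSumFinEquiv.symm i with
       | Sum.inl a => Sum.inl (Sum.inr a)
       | Sum.inr b => Sum.inr (Sum.inr b))

def tEquiv (k l : ℕ) : ((Fin k ⊕ Fin k) ⊕ (Fin l ⊕ Fin l)) ≃ (Fin (k + l) ⊕ Fin (k + l)) where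
  toFun := Sum.elim
    (Sum.map (fun a => finSumFinEquiv (Sum.inl a)) (fun a => finSumFinEquiv (Sum.inl a)))
    (Sum.map (fun b => finSumFinEquiv (Sum.inr b)) (fun b => finSumFinEquiv (Sum.inr b)))
  invFun := tInv k l
  left_inv := by
    rintro ((a | a) | (b | b)) <;> simp [tInv]
  right_inv := by
    rintro (i | i) <;> rcases h : finSumFinEquiv.symm i with a | b <;>
      have h2 := (Equiv.symm_apply_eq finSumFinEquiv).mp h <;>
      simp [tInv, h, h2]

theorem tEquiv_symm_eq (k l : ℕ) : ⇑(tEquiv k l).symm = tInv k l := rfl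

/-- the function whose kernel is `ptensor`. -/
def tfun {k l : ℕ} (p : PP k) (q : PP l) :
    Fin (k + l) ⊕ Fin (k + l) → Quotient p ⊕ Quotient q :=
  fun x => match x with
    | Sum.inl i =>
      (match finSumFinEquiv.symm i with
       | Sum.inl a => (Sum.inl (Quotient.mk p (Sum.inl a)) : Quotient p ⊕ Quotient q)
       | Sum.inr b => Sum.inr (Quotient.mk q (Sum.inl b)))
    | Sum.inr i =>
      (match finSumFinEquiv.symm i with
       | Sum.inl a => Sum.inl (Quotient.mk p (Sum.inr a))
       | Sum.inr b => Sum.inr (Quotient.mk q (Sum.inr b)))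

theorem ptensor_def {k l : ℕ} (p : PP k) (q : PP l) :
    ptensor p q = Setoid.ker (tfun p q) := rfl

theorem tfun_eq {k l : ℕ} (p : PP k) (q : PP l) :
    tfun p q = sfun p q ∘ (tInv k l) := by
  funext x
  rcases x with i | i <;> rcases h : finSumFinEquiv.symm i with a | b <;>
    simp [tfun, tInv, sfun, h]

theorem ptensor_eq {k l : ℕ} (p : PP k) (q : PP l) :
    ptensor p q = Setoid.comap (⇑(tEquiv k l).symm) (sumS p q) := by
  rw [ptensor_def, tfun_eq]
  apply Setoid.ext; intro x y
  show sfun p q (tInv k l x) = sfun p q (tInv k l y) ↔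
    sumS p q ((tEquiv k l).symm x) ((tEquiv k l).symm y)
  rw [tEquiv_symm_eq]
  exact Iff.rfl

theorem ptensor_mono {k l : ℕ} {p p' : PP k} {q q' : PP l} (hp : p ≤ p') (hq : q ≤ q') :
    ptensor p q ≤ ptensor p' q' := by
  rw [ptensor_eq, ptensor_eq]
  exact comap_equiv_mono _ (sumS_mono hp hq)

theorem ptensor_sup {k l : ℕ} (p₁ q₁ : PP k) (p₂ q₂ : PP l) :
    ptensor p₁ p₂ ⊔ ptensor q₁ q₂ = ptensor (p₁ ⊔ q₁) (p₂ ⊔ q₂) := by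
  rw [ptensor_eq, ptensor_eq, ptensor_eq, ← comap_equiv_sup, sumS_sup]

theorem nC_ptensor {k l : ℕ} (p : PP k) (q : PP l) : nC (ptensor p q) = nC p + nC q := by
  rw [ptensor_eq, nC_comap_equiv, nC_sumS]

theorem ptensor_inj {k l : ℕ} {p p' : PP k} {q q' : PP l}
    (h : ptensor p q = ptensor p' q') : p = p' ∧ q = q' := by
  rw [ptensor_eq, ptensor_eq] at h
  have h2 : sumS p q = sumS p' q' := by
    have := congrArg (Setoid.comap (⇑(tEquiv k l))) h
    rwa [comap_comap_equiv', comap_comap_equiv'] at this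
  exact sumS_inj h2

theorem ptensor_split {k l : ℕ} {q : PP (k + l)}
    (h : q ≤ ptensor (⊤ : PP k) (⊤ : PP l)) :
    ∃ (q₁ : PP k) (q₂ : PP l), q = ptensor q₁ q₂ := by
  set qt := Setoid.comap (⇑(tEquiv k l)) q with hqt
  have hsplit : qt ≤ sumS (⊤ : Setoid (Fin k ⊕ Fin k)) (⊤ : Setoid (Fin l ⊕ Fin l)) := by
    intro u v huv
    have h1 : ptensor (⊤ : PP k) (⊤ : PP l) ((tEquiv k l) u) ((tEquiv k l) v) := h huv
    rw [ptensor_eq] at h1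
    have h2 : sumS (⊤ : PP k) (⊤ : PP l)
        ((tEquiv k l).symm ((tEquiv k l) u)) ((tEquiv k l).symm ((tEquiv k l) v)) := h1
    simpa using h2
  refine ⟨Setoid.comap Sum.inl qt, Setoid.comap Sum.inr qt, ?_⟩
  have h3 : q = Setoid.comap (⇑(tEquiv k l).symm) qt := (comap_comap_equiv (tEquiv k l) q).symm
  rw [h3, ptensor_eq]
  exact congrArg _ (sumS_split hsplit)

theorem idP_tensor (k l : ℕ) : idP (k + l) = ptensor (idP k) (idP l) := by
  rw [ptensor_def]
  have hG : ∀ x : Fin (k + l) ⊕ Fin (k + l),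
      tfun (idP k) (idP l) x =
        (fun i : Fin (k + l) =>
          (match finSumFinEquiv.symm i with
           | Sum.inl a => (Sum.inl (Quotient.mk (idP k) (Sum.inl a)) :
               Quotient (idP k) ⊕ Quotient (idP l))
           | Sum.inr b => Sum.inr (Quotient.mk (idP l) (Sum.inl b)))) (Sum.elim id id x) := by
    rintro (i | i) <;> rcases h : finSumFinEquiv.symm i with a | b
    · simp only [tfun, Sum.elim_inl, id, h]
    · simp only [tfun, Sum.elim_inl, id, h]
    · simp only [tfun, Sum.elim_inr, id, h]
      exact congrArg Sum.inl (mk_eq_iff.mpr (by exact rfl))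
    · simp only [tfun, Sum.elim_inr, id, h]
      exact congrArg Sum.inr (mk_eq_iff.mpr (by exact rfl))
  apply Setoid.ext; intro x y
  show Sum.elim id id x = Sum.elim id id y ↔ tfun (idP k) (idP l) x = tfun (idP k) (idP l) y
  rw [hG x, hG y]
  constructor
  · intro h; rw [h]
  · intro h
    set G := fun i : Fin (k + l) =>
      (match finSumFinEquiv.symm i with
       | Sum.inl a => (Sum.inl (Quotient.mk (idP k) (Sum.inl a)) :
           Quotient (idP k) ⊕ Quotient (idP l))
       | Sum.inr b => Sum.inr (Quotient.mk (idP l) (Sum.inl b))) with hGdef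
    have hGinj : Function.Injective G := by
      intro i j hij
      rw [hGdef] at hij
      rcases hi : finSumFinEquiv.symm i with a | b <;> rcases hj : finSumFinEquiv.symm j with a' | b' <;>
        simp only [hi, hj] at hij
      · have : a = a' := by
          have h1 := mk_eq_iff.mp (Sum.inl.inj hij)
          exact h1
        have h2 : finSumFinEquiv.symm i = finSumFinEquiv.symm j := by rw [hi, hj, this]
        exact finSumFinEquiv.symm.injective h2
      · exact absurd hij (by simp)
      · exact absurd hij (by simp)
      · have : b = b' := by
          have h1 := mk_eq_iff.mp (Sum.inr.inj hij)
          exact h1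
        have h2 : finSumFinEquiv.symm i = finSumFinEquiv.symm j := by rw [hi, hj, this]
        exact finSumFinEquiv.symm.injective h2
    exact hGinj h

end PartB



section PartC

variable {k l : ℕ}

theorem d2_nonneg (p q : PP k) : 0 ≤ d2 p q := by
  have h1 : nC (p ⊔ q) ≤ nC p := nC_anti le_sup_left
  have h2 : nC (p ⊔ q) ≤ nC q := nC_anti le_sup_right
  unfold d2
  omega

theorem d2_self (p : PP k) : d2 p p = 0 := by
  unfold d2
  rw [sup_idem]
  ring

theorem d2_eq_zero {p q : PP k} (h : d2 p q = 0) : p = q := by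
  have h1 : nC (p ⊔ q) ≤ nC p := nC_anti le_sup_left
  have h2 : nC (p ⊔ q) ≤ nC q := nC_anti le_sup_right
  unfold d2 at h
  have e1 : p = p ⊔ q := setoid_eq_of_le_of_nC_le le_sup_left (by omega)
  have e2 : q = p ⊔ q := setoid_eq_of_le_of_nC_le le_sup_right (by omega)
  exact e1.trans e2.symm

theorem d2_triangle (p q r : PP k) : d2 p r ≤ d2 p q + d2 q r := by
  have h1 : nC (p ⊔ q) + nC (q ⊔ r) ≤ nC q + nC ((p ⊔ q) ⊔ (q ⊔ r)) :=
    nC_add_nC_le le_sup_right le_sup_left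
  have h2 : nC ((p ⊔ q) ⊔ (q ⊔ r)) ≤ nC (p ⊔ r) :=
    nC_anti (sup_le (le_sup_left.trans le_sup_left) (le_sup_right.trans le_sup_right))
  unfold d2
  omega

theorem pLe_refl (p : PP k) : pLe p p := by
  unfold pLe
  rw [d2_self]
  ring

theorem pLe_d2_le {q p : PP k} (h : pLe q p) : d2 (idP k) q ≤ d2 (idP k) p := by
  have h0 := d2_nonneg q p
  unfold pLe at h
  linarith

theorem pLe_d2_lt {q p : PP k} (h : pLe q p) (hne : q ≠ p) :
    d2 (idP k) q < d2 (idP k) p := by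
  have h0 : 0 < d2 q p :=
    (d2_nonneg q p).lt_of_ne (fun hz => hne (d2_eq_zero hz.symm))
  unfold pLe at h
  linarith

theorem d2_tensor (q₁ p₁ : PP k) (q₂ p₂ : PP l) :
    d2 (ptensor q₁ q₂) (ptensor p₁ p₂) = d2 q₁ p₁ + d2 q₂ p₂ := by
  unfold d2
  rw [ptensor_sup, nC_ptensor, nC_ptensor, nC_ptensor]
  push_cast
  ring

theorem pLe_tensor_iff {p₁ q₁ : PP k} {p₂ q₂ : PP l} :
    pLe (ptensor q₁ q₂) (ptensor p₁ p₂) ↔ (pLe q₁ p₁ ∧ pLe q₂ p₂) := by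
  unfold pLe
  rw [idP_tensor k l, d2_tensor, d2_tensor, d2_tensor]
  have t1 := d2_triangle (idP k) q₁ p₁
  have t2 := d2_triangle (idP l) q₂ p₂
  constructor
  · intro h
    constructor <;> linarith
  · rintro ⟨h1, h2⟩
    linarith

theorem pLe_tensor_decomp {p₁ : PP k} {p₂ : PP l} {q : PP (k + l)}
    (h : pLe q (ptensor p₁ p₂)) :
    ∃ (q₁ : PP k) (q₂ : PP l), pLe q₁ p₁ ∧ pLe q₂ p₂ ∧ q = ptensor q₁ q₂ := by
  have hstar : nC q + nC (idP (k + l) ⊔ ptensor p₁ p₂) =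
      nC (idP (k + l) ⊔ q) + nC (q ⊔ ptensor p₁ p₂) := by
    unfold pLe d2 at h
    omega
  have h1 : nC (idP (k + l) ⊔ q) + nC (q ⊔ ptensor p₁ p₂) ≤
      nC q + nC ((idP (k + l) ⊔ q) ⊔ (q ⊔ ptensor p₁ p₂)) :=
    nC_add_nC_le le_sup_right le_sup_left
  have hassoc : (idP (k + l) ⊔ q) ⊔ (q ⊔ ptensor p₁ p₂) =
      (idP (k + l) ⊔ ptensor p₁ p₂) ⊔ q := by
    refine le_antisymm (sup_le (sup_le ?_ ?_) (sup_le ?_ ?_)) (sup_le (sup_le ?_ ?_) ?_)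
    · exact le_sup_left.trans le_sup_left
    · exact le_sup_right
    · exact le_sup_right
    · exact le_sup_right.trans le_sup_left
    · exact le_sup_left.trans le_sup_left
    · exact le_sup_right.trans le_sup_right
    · exact le_sup_right.trans le_sup_left
  rw [hassoc] at h1
  have h2 : nC ((idP (k + l) ⊔ ptensor p₁ p₂) ⊔ q) ≤ nC (idP (k + l) ⊔ ptensor p₁ p₂) :=
    nC_anti le_sup_left
  have h3 : nC (idP (k + l) ⊔ ptensor p₁ p₂) ≤ nC ((idP (k + l) ⊔ ptensor p₁ p₂) ⊔ q) := by
    omega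
  have h4 : (idP (k + l) ⊔ ptensor p₁ p₂) = (idP (k + l) ⊔ ptensor p₁ p₂) ⊔ q :=
    setoid_eq_of_le_of_nC_le le_sup_left h3
  have hq1 : q ≤ idP (k + l) ⊔ ptensor p₁ p₂ := sup_eq_left.mp h4.symm
  have hqS : q ≤ ptensor (⊤ : PP k) (⊤ : PP l) := by
    refine hq1.trans (sup_le ?_ (ptensor_mono le_top le_top))
    rw [idP_tensor]
    exact ptensor_mono le_top le_top
  obtain ⟨q₁, q₂, rfl⟩ := ptensor_split hqS
  obtain ⟨hA, hB⟩ := pLe_tensor_iff.mp h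
  exact ⟨q₁, q₂, hA, hB, rfl⟩

end PartC

section PartD

private lemma ite_and_mul {P Q : Prop} (x y : ℂ) :
    (if P ∧ Q then x * y else 0) = (if P then x else 0) * (if Q then y else 0) := by
  by_cases hP : P <;> by_cases hQ : Q <;> simp [hP, hQ]

private lemma sum_pair_mul {k l : ℕ} (s₁ : PP k) (s₂ : PP l) (F : PP k → ℂ) (G : PP l → ℂ) :
    ∑ r : PP k × PP l, (if pLe r.1 s₁ ∧ pLe r.2 s₂ then F r.1 * G r.2 else 0)
      = (∑ q : PP k, if pLe q s₁ then F q else 0) *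
        (∑ q : PP l, if pLe q s₂ then G q else 0) := by
  rw [Finset.sum_mul_sum, Fintype.sum_prod_type]
  exact Finset.sum_congr rfl fun q₁ _ => Finset.sum_congr rfl fun q₂ _ => ite_and_mul _ _

private lemma sum_reindex {k l : ℕ} (p₁ : PP k) (p₂ : PP l) (F : PP (k + l) → ℂ) :
    ∑ q : PP (k + l), (if pLe q (ptensor p₁ p₂) then F q else 0)
      = ∑ r : PP k × PP l, (if pLe r.1 p₁ ∧ pLe r.2 p₂ then F (ptensor r.1 r.2) else 0) := by
  rw [← Finset.sum_filter, ← Finset.sum_filter]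
  refine (Finset.sum_bij
    (fun (r : PP k × PP l) (_ : r ∈ Finset.univ.filter fun r : PP k × PP l =>
      pLe r.1 p₁ ∧ pLe r.2 p₂) => ptensor r.1 r.2) ?_ ?_ ?_ ?_).symm
  · intro r hr
    simp only [Finset.mem_filter, Finset.mem_univ, true_and] at hr ⊢
    exact pLe_tensor_iff.mpr hr
  · intro r₁ _ r₂ _ h
    have := ptensor_inj h
    exact Prod.ext this.1 this.2
  · intro q hq
    simp only [Finset.mem_filter, Finset.mem_univ, true_and] at hq
    obtain ⟨q₁, q₂, hA, hB, rfl⟩ := pLe_tensor_decomp hq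
    exact ⟨(q₁, q₂), by simp [hA, hB], rfl⟩
  · intro r _
    rfl

end PartD

/-- A `P`-tracial algebra is deterministic (its moments factorize over
tensor products of partitions) iff its `P`-cumulants factorize over tensor products. -/
theorem deterministic_iff_cumulants_factorize {A : Type*} [Ring A] [Algebra ℂ A]
    (T : PTracial A)
    (κ : ∀ k : ℕ, PP k → (Fin k → A) → ℂ)
    (hκ : ∀ (k : ℕ) (p : PP k) (a : Fin k → A),
      T.m k p a = ∑ p' : PP k, if pLe p' p then κ k p' a else 0) :
    (∀ (k₁ k₂ : ℕ), 1 ≤ k₁ → 1 ≤ k₂ →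
      ∀ (p₁ : PP k₁) (p₂ : PP k₂) (a : Fin k₁ → A) (b : Fin k₂ → A),
        T.m (k₁ + k₂) (ptensor p₁ p₂) (Fin.append a b) = T.m k₁ p₁ a * T.m k₂ p₂ b) ↔
    (∀ (k₁ k₂ : ℕ), 1 ≤ k₁ → 1 ≤ k₂ →
      ∀ (p₁ : PP k₁) (p₂ : PP k₂) (a : Fin k₁ → A) (b : Fin k₂ → A),
        κ (k₁ + k₂) (ptensor p₁ p₂) (Fin.append a b) = κ k₁ p₁ a * κ k₂ p₂ b) := by
  constructor
  · -- moments factorize ⇒ cumulants factorize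
    intro hdet k₁ k₂ h1 h2 p₁ p₂ a b
    set f : PP k₁ × PP k₂ → ℂ := fun r =>
      κ (k₁ + k₂) (ptensor r.1 r.2) (Fin.append a b) - κ k₁ r.1 a * κ k₂ r.2 b with hf
    have hsum : ∀ (s₁ : PP k₁) (s₂ : PP k₂),
        ∑ r : PP k₁ × PP k₂, (if pLe r.1 s₁ ∧ pLe r.2 s₂ then f r else 0) = 0 := by
      intro s₁ s₂
      have e0 : ∀ r : PP k₁ × PP k₂,
          (if pLe r.1 s₁ ∧ pLe r.2 s₂ then f r else 0)
            = (if pLe r.1 s₁ ∧ pLe r.2 s₂ then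
                κ (k₁ + k₂) (ptensor r.1 r.2) (Fin.append a b) else 0)
              - (if pLe r.1 s₁ ∧ pLe r.2 s₂ then κ k₁ r.1 a * κ k₂ r.2 b else 0) := by
        intro r
        by_cases hc : pLe r.1 s₁ ∧ pLe r.2 s₂ <;> simp [hc, hf]
      rw [Finset.sum_congr rfl (fun r _ => e0 r), Finset.sum_sub_distrib,
        ← sum_reindex s₁ s₂ (fun q => κ (k₁ + k₂) q (Fin.append a b)),
        sum_pair_mul s₁ s₂ (fun q => κ k₁ q a) (fun q => κ k₂ q b),
        ← hκ (k₁ + k₂) (ptensor s₁ s₂) (Fin.append a b), ← hκ k₁ s₁ a, ← hκ k₂ s₂ b,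
        hdet k₁ k₂ h1 h2 s₁ s₂ a b]
      ring
    have core : ∀ (s₁ : PP k₁) (s₂ : PP k₂),
        (∀ r : PP k₁ × PP k₂, pLe r.1 s₁ → pLe r.2 s₂ → r ≠ (s₁, s₂) → f r = 0) →
        f (s₁, s₂) = 0 := by
      intro s₁ s₂ hr
      have hrest : ∑ r ∈ Finset.univ.erase ((s₁, s₂) : PP k₁ × PP k₂),
          (if pLe r.1 s₁ ∧ pLe r.2 s₂ then f r else 0) = 0 := by
        refine Finset.sum_eq_zero fun r hmem => ?_
        by_cases hc : pLe r.1 s₁ ∧ pLe r.2 s₂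
        · rw [if_pos hc]
          exact hr r hc.1 hc.2 (Finset.mem_erase.mp hmem).1
        · rw [if_neg hc]
      have h0 := hsum s₁ s₂
      rw [← Finset.add_sum_erase _ _ (Finset.mem_univ ((s₁, s₂) : PP k₁ × PP k₂)), hrest,
        add_zero, if_pos ⟨pLe_refl s₁, pLe_refl s₂⟩] at h0
      exact h0
    have hmeas : ∀ (r : PP k₁ × PP k₂) (s₁ : PP k₁) (s₂ : PP k₂),
        pLe r.1 s₁ → pLe r.2 s₂ → r ≠ (s₁, s₂) →
        d2 (idP k₁) r.1 + d2 (idP k₂) r.2 < d2 (idP k₁) s₁ + d2 (idP k₂) s₂ := by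
      intro r s₁ s₂ hr1 hr2 hne
      have hne' : r.1 ≠ s₁ ∨ r.2 ≠ s₂ := by
        by_contra hcon
        push_neg at hcon
        exact hne (Prod.ext hcon.1 hcon.2)
      rcases hne' with hne1 | hne2
      · have := pLe_d2_lt hr1 hne1
        have := pLe_d2_le hr2
        linarith
      · have := pLe_d2_le hr1
        have := pLe_d2_lt hr2 hne2
        linarith
    have key : ∀ n : ℕ, ∀ (s₁ : PP k₁) (s₂ : PP k₂),
        d2 (idP k₁) s₁ + d2 (idP k₂) s₂ ≤ (n : ℤ) → f (s₁, s₂) = 0 := by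
      intro n
      induction n with
      | zero =>
        intro s₁ s₂ hn
        refine core s₁ s₂ fun r hr1 hr2 hne => ?_
        exfalso
        have hlt := hmeas r s₁ s₂ hr1 hr2 hne
        have hp1 := d2_nonneg (idP k₁) r.1
        have hp2 := d2_nonneg (idP k₂) r.2
        simp only [Nat.cast_zero] at hn
        linarith
      | succ n ih =>
        intro s₁ s₂ hn
        refine core s₁ s₂ fun r hr1 hr2 hne => ?_
        have hlt := hmeas r s₁ s₂ hr1 hr2 hne
        refine ih r.1 r.2 ?_
        push_cast at hn ⊢
        linarith
    have hfin := key (d2 (idP k₁) p₁ + d2 (idP k₂) p₂).toNat p₁ p₂ (Int.self_le_toNat _)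
    have : κ (k₁ + k₂) (ptensor p₁ p₂) (Fin.append a b) - κ k₁ p₁ a * κ k₂ p₂ b = 0 := hfin
    exact sub_eq_zero.mp this
  · -- cumulants factorize ⇒ moments factorize
    intro hfact k₁ k₂ h1 h2 p₁ p₂ a b
    rw [hκ (k₁ + k₂) (ptensor p₁ p₂) (Fin.append a b), hκ k₁ p₁ a, hκ k₂ p₂ b,
      sum_reindex p₁ p₂ (fun q => κ (k₁ + k₂) q (Fin.append a b)),
      ← sum_pair_mul p₁ p₂ (fun q => κ k₁ q a) (fun q => κ k₂ q b)]
    refine Finset.sum_congr rfl fun r _ => ?_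
    by_cases hc : pLe r.1 p₁ ∧ pLe r.2 p₂ <;>
      simp [hc, hfact k₁ k₂ h1 h2 r.1 r.2 a b]
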